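/- Let x_1, …, x_n ∈ ℝ^d be unit vectors, let b : ℕ → ℝ satisfy b_k ≥ 0 for all k and Σ_{k=0}^∞ b_k < ∞, and suppose the n×n matrix H with entries H_{ab} = Σ_{k=0}^∞ b_k (x_a · x_b)^k is positive definite. Fix p ≥ 1 with b_p > 0, and vectors β_1, …, β_p ∈ ℝ^d. Define y ∈ ℝⁿ by y_a = Π_{i=1}^p (β_i · x_a). Then yᵀ H⁻¹ y ≤ b_p⁻¹ Π_{i=1}^p ‖β_i‖². In particular, if b_p ≥ p⁻², then √(yᵀ H⁻¹ y) ≤ p Π_{i=1}^p ‖β_i‖. -/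

import Mathlib

open Matrix
open Finset
open scoped RealInnerProductSpace

/-- **Learning a product of linear functions (Lemma: multivariate monomials).**
For unit-norm data `x₁, …, xₙ ∈ ℝ^d` and a power-series kernel with coefficients
`b k ≥ 0`, `∑ b k < ∞`, whose Gram matrix `H` is positive definite: if `p ≥ 1`,
`b p > 0`, and `y_a = ∏ᵢ ⟪βᵢ, x_a⟫`, then `yᵀ H⁻¹ y ≤ (b p)⁻¹ ∏ᵢ ‖βᵢ‖²`; in
particular if `b p ≥ p⁻²` then `√(yᵀ H⁻¹ y) ≤ p ∏ᵢ ‖βᵢ‖`. -/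
theorem stmt3 (n d : ℕ) (x : Fin n → EuclideanSpace ℝ (Fin d))
    (hx : ∀ a, ‖x a‖ = 1)
    (b : ℕ → ℝ) (hb_nonneg : ∀ k, 0 ≤ b k) (hb_sum : Summable b)
    (H : Matrix (Fin n) (Fin n) ℝ)
    (hH : ∀ a c, H a c = ∑' k : ℕ, b k * ⟪x a, x c⟫ ^ k)
    (hHpd : H.PosDef)
    (p : ℕ) (hp : 1 ≤ p) (hbp : 0 < b p)
    (β : Fin p → EuclideanSpace ℝ (Fin d))
    (y : Fin n → ℝ) (hy : ∀ a, y a = ∏ i, ⟪β i, x a⟫) :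
    y ⬝ᵥ (H⁻¹ *ᵥ y) ≤ (b p)⁻¹ * ∏ i, ‖β i‖ ^ 2 ∧
    ((p : ℝ)⁻¹ ^ 2 ≤ b p →
      Real.sqrt (y ⬝ᵥ (H⁻¹ *ᵥ y)) ≤ (p : ℝ) * ∏ i, ‖β i‖) := by
  classical
  -- invertibility
  have hdet : IsUnit H.det := isUnit_iff_ne_zero.mpr (ne_of_gt hHpd.det_pos)
  set z : Fin n → ℝ := H⁻¹ *ᵥ y with hzdef
  have hHz : H *ᵥ z = y := by
    rw [hzdef, Matrix.mulVec_mulVec, Matrix.mul_nonsing_inv _ hdet, Matrix.one_mulVec]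
  -- inner product formula
  have hip : ∀ (u v : EuclideanSpace ℝ (Fin d)), ⟪u, v⟫ = ∑ j, u j * v j := by
    intro u v
    simp [PiLp.inner_apply, RCLike.inner_apply, starRingEnd_apply]
    exact Finset.sum_congr rfl fun j _ => mul_comm _ _
  have hip1 : ∀ a c : Fin n, |⟪x a, x c⟫| ≤ 1 := by
    intro a c
    have := abs_real_inner_le_norm (x a) (x c)
    rwa [hx a, hx c, one_mul] at this
  -- power expansion
  have hpow : ∀ (a c : Fin n) (k : ℕ), ⟪x a, x c⟫ ^ k
      = ∑ f : Fin k → Fin d, (∏ i, x a (f i)) * (∏ i, x c (f i)) := by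
    intro a c k
    rw [hip]
    have h1 : (∑ j, x a j * x c j) ^ k = ∏ _i : Fin k, ∑ j, x a j * x c j := by
      rw [Finset.prod_const, Finset.card_univ, Fintype.card_fin]
    rw [h1, Finset.prod_univ_sum]
    rw [Fintype.piFinset_univ]
    exact Finset.sum_congr rfl fun f _ => Finset.prod_mul_distrib
  -- quadratic form per degree is a sum of squares
  have key : ∀ k : ℕ, (∑ a, ∑ c, z a * z c * ⟪x a, x c⟫ ^ k)
      = ∑ f : Fin k → Fin d, (∑ a, z a * ∏ i, x a (f i)) ^ 2 := by
    intro k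
    calc ∑ a, ∑ c, z a * z c * ⟪x a, x c⟫ ^ k
        = ∑ a, ∑ c, ∑ f : Fin k → Fin d,
            (z a * ∏ i, x a (f i)) * (z c * ∏ i, x c (f i)) := by
          refine Finset.sum_congr rfl fun a _ => Finset.sum_congr rfl fun c _ => ?_
          rw [hpow, Finset.mul_sum]
          exact Finset.sum_congr rfl fun f _ => by ring
      _ = ∑ a, ∑ f : Fin k → Fin d, ∑ c,
            (z a * ∏ i, x a (f i)) * (z c * ∏ i, x c (f i)) := by
          exact Finset.sum_congr rfl fun a _ => Finset.sum_comm
      _ = ∑ f : Fin k → Fin d, ∑ a, ∑ c,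
            (z a * ∏ i, x a (f i)) * (z c * ∏ i, x c (f i)) := Finset.sum_comm
      _ = ∑ f : Fin k → Fin d, (∑ a, z a * ∏ i, x a (f i)) ^ 2 := by
          refine Finset.sum_congr rfl fun f _ => ?_
          rw [sq, Finset.sum_mul_sum]
  -- summability per pair
  have hsummand : ∀ a c : Fin n,
      Summable (fun k => z a * z c * (b k * ⟪x a, x c⟫ ^ k)) := by
    intro a c
    refine Summable.of_norm_bounded (g := fun k => |z a * z c| * b k)
      (hb_sum.mul_left _) fun k => ?_
    rw [Real.norm_eq_abs, abs_mul]
    refine mul_le_mul_of_nonneg_left ?_ (abs_nonneg _)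
    rw [abs_mul, abs_pow, abs_of_nonneg (hb_nonneg k)]
    exact mul_le_of_le_one_right (hb_nonneg k) (pow_le_one₀ (abs_nonneg _) (hip1 a c))
  set g : ℕ → ℝ := fun k => ∑ a, ∑ c, z a * z c * (b k * ⟪x a, x c⟫ ^ k) with hgdef
  have hg_summable : Summable g := by
    refine summable_sum fun a _ => summable_sum fun c _ => hsummand a c
  have hgkey : ∀ k, g k = b k * ∑ f : Fin k → Fin d, (∑ a, z a * ∏ i, x a (f i)) ^ 2 := by
    intro k
    rw [← key k, hgdef, Finset.mul_sum]
    refine Finset.sum_congr rfl fun a _ => ?_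
    rw [Finset.mul_sum]
    exact Finset.sum_congr rfl fun c _ => by ring
  have hg_nonneg : ∀ k, 0 ≤ g k := by
    intro k
    rw [hgkey k]
    exact mul_nonneg (hb_nonneg k) (Finset.sum_nonneg fun f _ => sq_nonneg _)
  -- the quadratic form equals the tsum
  have hdot : z ⬝ᵥ (H *ᵥ z) = ∑' k, g k := by
    have h1 : z ⬝ᵥ (H *ᵥ z) = ∑ a, ∑ c, ∑' k, z a * z c * (b k * ⟪x a, x c⟫ ^ k) := by
      simp only [dotProduct, Matrix.mulVec, Finset.mul_sum]
      refine Finset.sum_congr rfl fun a _ => Finset.sum_congr rfl fun c _ => ?_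
      rw [hH a c, tsum_mul_left]
      ring
    rw [h1]
    calc ∑ a, ∑ c, ∑' k, z a * z c * (b k * ⟪x a, x c⟫ ^ k)
        = ∑ a, ∑' k, ∑ c, z a * z c * (b k * ⟪x a, x c⟫ ^ k) :=
          Finset.sum_congr rfl fun a _ => (Summable.tsum_finsetSum fun c _ => hsummand a c).symm
      _ = ∑' k, ∑ a, ∑ c, z a * z c * (b k * ⟪x a, x c⟫ ^ k) :=
          (Summable.tsum_finsetSum fun a _ => summable_sum fun c _ => hsummand a c).symm
  -- main inequality ingredients
  set v : (Fin p → Fin d) → ℝ := fun f => ∑ a, z a * ∏ i, x a (f i) with hvdef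
  set w : (Fin p → Fin d) → ℝ := fun f => ∏ i, β i (f i) with hwdef
  have hzy : z ⬝ᵥ y = z ⬝ᵥ (H *ᵥ z) := by rw [hHz]
  have hge : b p * ∑ f : Fin p → Fin d, v f ^ 2 ≤ z ⬝ᵥ y := by
    rw [hzy, hdot, ← hgkey p]
    exact Summable.le_tsum hg_summable p fun k _ => hg_nonneg k
  have hzy_nonneg : 0 ≤ z ⬝ᵥ y := by
    rw [hzy, hdot]
    exact tsum_nonneg hg_nonneg
  have hzy_eq : z ⬝ᵥ y = ∑ f : Fin p → Fin d, w f * v f := by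
    have hya : ∀ a, y a = ∑ f : Fin p → Fin d, w f * ∏ i, x a (f i) := by
      intro a
      rw [hy a]
      have h2 : ∀ i : Fin p, ⟪β i, x a⟫ = ∑ j, β i j * x a j := fun i => hip _ _
      calc ∏ i, ⟪β i, x a⟫ = ∏ i, ∑ j, β i j * x a j := Finset.prod_congr rfl fun i _ => h2 i
        _ = ∑ f ∈ Fintype.piFinset fun _ : Fin p => (univ : Finset (Fin d)),
              ∏ i, β i (f i) * x a (f i) := Finset.prod_univ_sum _ _
        _ = ∑ f : Fin p → Fin d, w f * ∏ i, x a (f i) := by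
            rw [Fintype.piFinset_univ]
            exact Finset.sum_congr rfl fun f _ => Finset.prod_mul_distrib
    calc z ⬝ᵥ y = ∑ a, ∑ f : Fin p → Fin d, w f * (z a * ∏ i, x a (f i)) := by
          refine Finset.sum_congr rfl fun a _ => ?_
          rw [hya a, Finset.mul_sum]
          exact Finset.sum_congr rfl fun f _ => by ring
      _ = ∑ f : Fin p → Fin d, ∑ a, w f * (z a * ∏ i, x a (f i)) := Finset.sum_comm
      _ = ∑ f : Fin p → Fin d, w f * v f := by
          refine Finset.sum_congr rfl fun f _ => ?_
          rw [hvdef, Finset.mul_sum]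
  have hwsum : ∑ f : Fin p → Fin d, w f ^ 2 = ∏ i, ‖β i‖ ^ 2 := by
    have hnorm : ∀ i : Fin p, ‖β i‖ ^ 2 = ∑ j, β i j ^ 2 := by
      intro i
      rw [EuclideanSpace.norm_eq, Real.sq_sqrt (Finset.sum_nonneg fun j _ => sq_nonneg _)]
      exact Finset.sum_congr rfl fun j _ => by rw [Real.norm_eq_abs, sq_abs]
    calc ∑ f : Fin p → Fin d, w f ^ 2
        = ∑ f ∈ Fintype.piFinset fun _ : Fin p => (univ : Finset (Fin d)),
            ∏ i, β i (f i) ^ 2 := by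
          rw [Fintype.piFinset_univ]
          exact Finset.sum_congr rfl fun f _ => by rw [hwdef]; exact (Finset.prod_pow _ _ _).symm
      _ = ∏ i, ∑ j, β i j ^ 2 := (Finset.prod_univ_sum (fun _ : Fin p => (univ : Finset (Fin d))) fun i j => β i j ^ 2).symm
      _ = ∏ i, ‖β i‖ ^ 2 := Finset.prod_congr rfl fun i _ => (hnorm i).symm
  -- main bound
  have hquad : y ⬝ᵥ z = z ⬝ᵥ y := dotProduct_comm _ _
  have hbne : b p ≠ 0 := ne_of_gt hbp
  have main : y ⬝ᵥ z ≤ (b p)⁻¹ * ∏ i, ‖β i‖ ^ 2 := by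
    rw [hquad, ← hwsum]
    have h3 : z ⬝ᵥ y ≤ 2 * ∑ f : Fin p → Fin d, w f * v f
        - b p * ∑ f : Fin p → Fin d, v f ^ 2 := by
      rw [← hzy_eq]; linarith [hge]
    refine h3.trans ?_
    have h6 : (b p)⁻¹ * ∑ f : Fin p → Fin d, w f ^ 2
        = ∑ f : Fin p → Fin d, (b p)⁻¹ * w f ^ 2 := Finset.mul_sum _ _ _
    rw [h6, Finset.mul_sum, Finset.mul_sum, ← Finset.sum_sub_distrib]
    refine Finset.sum_le_sum fun f _ => ?_
    have h5 : 0 ≤ (b p)⁻¹ * (w f - b p * v f) ^ 2 := by positivity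
    have h7 : (b p)⁻¹ * b p = 1 := inv_mul_cancel₀ hbne
    nlinarith [h5, h7, sq_nonneg (v f), sq_nonneg (w f)]
  refine ⟨main, fun hbp2 => ?_⟩
  have hq_nonneg : 0 ≤ y ⬝ᵥ z := by rw [hquad]; exact hzy_nonneg
  have hppos : (0 : ℝ) < p := by exact_mod_cast hp
  have hinv : (b p)⁻¹ ≤ (p : ℝ) ^ 2 := by
    rw [inv_pow] at hbp2
    calc (b p)⁻¹ ≤ (((p : ℝ) ^ 2)⁻¹)⁻¹ := by
          exact inv_anti₀ (by positivity) hbp2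
      _ = (p : ℝ) ^ 2 := inv_inv _
  have hstep : y ⬝ᵥ z ≤ ((p : ℝ) * ∏ i, ‖β i‖) ^ 2 := by
    have h8 : (b p)⁻¹ * ∏ i, ‖β i‖ ^ 2 ≤ (p : ℝ) ^ 2 * ∏ i, ‖β i‖ ^ 2 :=
      mul_le_mul_of_nonneg_right hinv (Finset.prod_nonneg fun i _ => sq_nonneg _)
    refine (main.trans h8).trans_eq ?_
    rw [mul_pow, Finset.prod_pow]
  calc Real.sqrt (y ⬝ᵥ z) ≤ Real.sqrt (((p : ℝ) * ∏ i, ‖β i‖) ^ 2) :=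
        Real.sqrt_le_sqrt hstep
    _ = (p : ℝ) * ∏ i, ‖β i‖ := Real.sqrt_sq (by positivity)
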